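/- Let θ be a formula such that there exists a TEHS in which θ is satisfiable. Then θ is satisfiable in a pseudo-TEM, i.e., true at some point of some pseudo-TEM. -/

import Mathlib

namespace CMATEL

/-- A coalition is a nonempty set of agents. -/
def Coalition (Agt : Type) : Type := {A : Set Agt // A.Nonempty}

/-- The singleton coalition `{a}`. -/
def single {Agt : Type} (a : Agt) : Coalition Agt := ⟨{a}, Set.singleton_nonempty a⟩

/-- Formulas of the language L. -/
inductive Formula (Agt AP : Type) : Type where
  | atom : AP → Formula Agt AP
  | neg  : Formula Agt AP → Formula Agt AP
  | and  : Formula Agt AP → Formula Agt AP → Formula Agt AP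
  | next : Formula Agt AP → Formula Agt AP
  | untl : Formula Agt AP → Formula Agt AP → Formula Agt AP
  | dk   : Coalition Agt → Formula Agt AP → Formula Agt AP
  | ck   : Coalition Agt → Formula Agt AP → Formula Agt AP

variable {Agt AP : Type}

def Formula.imp (φ ψ : Formula Agt AP) : Formula Agt AP :=
  Formula.neg (Formula.and φ (Formula.neg ψ))
def Formula.or (φ ψ : Formula Agt AP) : Formula Agt AP :=
  Formula.neg (Formula.and (Formula.neg φ) (Formula.neg ψ))
def Formula.iff (φ ψ : Formula Agt AP) : Formula Agt AP :=
  Formula.and (φ.imp ψ) (ψ.imp φ)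

/-- The set of subformulas of a formula. -/
def Formula.subf : Formula Agt AP → Set (Formula Agt AP)
  | .atom p   => {Formula.atom p}
  | .neg φ    => insert (Formula.neg φ) φ.subf
  | .and φ ψ  => insert (Formula.and φ ψ) (φ.subf ∪ ψ.subf)
  | .next φ   => insert (Formula.next φ) φ.subf
  | .untl φ ψ => insert (Formula.untl φ ψ) (φ.subf ∪ ψ.subf)
  | .dk A φ   => insert (Formula.dk A φ) φ.subf
  | .ck A φ   => insert (Formula.ck A φ) φ.subf

/-- A temporal-epistemic system (TES): a nonempty set of states, a nonempty set
of runs, and, for every coalition `A`, relations `R^D_A` and `R^C_A` on points,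
where `R^C_A` is the reflexive transitive closure of the union of `R^D_{A'}`
over coalitions `A' ⊆ A`. -/
structure TES (Agt : Type) where
  State : Type
  stateNE : Nonempty State
  runs : Set (ℕ → State)
  runsNE : runs.Nonempty
  RD : Coalition Agt → ↥runs × ℕ → ↥runs × ℕ → Prop
  RC : Coalition Agt → ↥runs × ℕ → ↥runs × ℕ → Prop
  hRC : ∀ A : Coalition Agt, RC A =
    Relation.ReflTransGen (fun x y => ∃ A' : Coalition Agt, A'.1 ⊆ A.1 ∧ RD A' x y)

abbrev TES.Point (G : TES Agt) : Type := ↥G.runs × ℕ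

/-- Synchrony: epistemically related points have the same time component. -/
def TES.Synchronous (G : TES Agt) : Prop :=
  ∀ (A : Coalition Agt) (x y : G.Point), G.RD A x y → x.2 = y.2

/-- A TEF: each `R^D_A` is an equivalence, and `R^D_A = ⋂_{a ∈ A} R^D_{{a}}`. -/
def IsTEF (G : TES Agt) : Prop :=
  (∀ A : Coalition Agt, Equivalence (G.RD A)) ∧
  (∀ (A : Coalition Agt) (x y : G.Point), G.RD A x y ↔ ∀ a ∈ A.1, G.RD (single a) x y)

/-- A pseudo-TEF: each `R^D_A` is an equivalence, and `R^D_A ⊆ R^D_B` for `B ⊆ A`. -/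
def IsPseudoTEF (G : TES Agt) : Prop :=
  (∀ A : Coalition Agt, Equivalence (G.RD A)) ∧
  (∀ (A B : Coalition Agt), B.1 ⊆ A.1 → ∀ x y : G.Point, G.RD A x y → G.RD B x y)

/-- Satisfaction at points `R × ℕ`, given the epistemic relations and a labeling. -/
def Sat {R : Type} (RD RC : Coalition Agt → R × ℕ → R × ℕ → Prop)
    (lab : R × ℕ → Set AP) : R × ℕ → Formula Agt AP → Prop
  | x, .atom p => p ∈ lab x
  | x, .neg φ => ¬ Sat RD RC lab x φ
  | x, .and φ ψ => Sat RD RC lab x φ ∧ Sat RD RC lab x ψ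
  | x, .next φ => Sat RD RC lab (x.1, x.2 + 1) φ
  | x, .untl φ ψ => ∃ i, x.2 ≤ i ∧ Sat RD RC lab (x.1, i) ψ ∧
      ∀ j, x.2 ≤ j → j < i → Sat RD RC lab (x.1, j) φ
  | x, .dk A φ => ∀ y, RD A x y → Sat RD RC lab y φ
  | x, .ck A φ => ∀ y, RC A x y → Sat RD RC lab y φ

/-- A temporal-epistemic model: a TEF together with a labeling of points. -/
structure TEM (Agt AP : Type) where
  G : TES Agt
  lab : G.Point → Set AP
  isTEF : IsTEF G

def TEM.sat (M : TEM Agt AP) : M.G.Point → Formula Agt AP → Prop :=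
  Sat M.G.RD M.G.RC M.lab

/-- A pseudo temporal-epistemic model: a pseudo-TEF together with a labeling. -/
structure PseudoTEM (Agt AP : Type) where
  G : TES Agt
  lab : G.Point → Set AP
  isPTEF : IsPseudoTEF G

def PseudoTEM.sat (M : PseudoTEM Agt AP) : M.G.Point → Formula Agt AP → Prop :=
  Sat M.G.RD M.G.RC M.lab

/-- `A`-reachability: the reflexive transitive closure of single-agent steps
`R^D_{{a}}`, `a ∈ A`. -/
def AReach (G : TES Agt) (A : Coalition Agt) : G.Point → G.Point → Prop :=
  Relation.ReflTransGen (fun x y => ∃ a ∈ A.1, G.RD (single a) x y)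

/-- Fully expanded sets of formulas. -/
def FullyExpanded (Δ : Set (Formula Agt AP)) : Prop :=
  (∀ φ : Formula Agt AP, Formula.neg (Formula.neg φ) ∈ Δ → φ ∈ Δ) ∧
  (∀ φ ψ : Formula Agt AP, Formula.and φ ψ ∈ Δ → φ ∈ Δ ∧ ψ ∈ Δ) ∧
  (∀ φ ψ : Formula Agt AP, Formula.neg (Formula.and φ ψ) ∈ Δ →
      Formula.neg φ ∈ Δ ∨ Formula.neg ψ ∈ Δ) ∧
  (∀ φ : Formula Agt AP, Formula.neg (Formula.next φ) ∈ Δ →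
      Formula.next (Formula.neg φ) ∈ Δ) ∧
  (∀ φ ψ : Formula Agt AP, Formula.untl φ ψ ∈ Δ →
      ψ ∈ Δ ∨ (φ ∈ Δ ∧ Formula.next (Formula.untl φ ψ) ∈ Δ)) ∧
  (∀ φ ψ : Formula Agt AP, Formula.neg (Formula.untl φ ψ) ∈ Δ →
      (Formula.neg ψ ∈ Δ ∧ Formula.neg φ ∈ Δ) ∨
      (Formula.neg ψ ∈ Δ ∧ Formula.neg (Formula.next (Formula.untl φ ψ)) ∈ Δ)) ∧
  (∀ (A A' : Coalition Agt) (φ : Formula Agt AP), Formula.dk A φ ∈ Δ →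
      A.1 ⊆ A'.1 → Formula.dk A' φ ∈ Δ) ∧
  (∀ (A : Coalition Agt) (φ : Formula Agt AP), Formula.dk A φ ∈ Δ → φ ∈ Δ) ∧
  (∀ (A : Coalition Agt) (φ : Formula Agt AP), Formula.ck A φ ∈ Δ →
      ∀ a ∈ A.1, Formula.dk (single a) (Formula.and φ (Formula.ck A φ)) ∈ Δ) ∧
  (∀ (A : Coalition Agt) (φ : Formula Agt AP), Formula.neg (Formula.ck A φ) ∈ Δ →
      ∃ a ∈ A.1, Formula.neg (Formula.dk (single a) (Formula.and φ (Formula.ck A φ))) ∈ Δ) ∧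
  (∀ ψ ∈ Δ, ∀ (A : Coalition Agt) (φ : Formula Agt AP),
      Formula.dk A φ ∈ ψ.subf → Formula.dk A φ ∈ Δ ∨ Formula.neg (Formula.dk A φ) ∈ Δ)

/-- Hintikka-structure conditions (H1)–(H7) for a labeling `H` on a TES. -/
def IsHintikka (G : TES Agt) (H : G.Point → Set (Formula Agt AP)) : Prop :=
  (∀ (x : G.Point) (φ : Formula Agt AP), Formula.neg φ ∈ H x → φ ∉ H x) ∧
  (∀ x : G.Point, FullyExpanded (H x)) ∧
  (∀ (r : ↥G.runs) (n : ℕ) (φ : Formula Agt AP),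
      Formula.next φ ∈ H (r, n) → φ ∈ H (r, n + 1)) ∧
  (∀ (r : ↥G.runs) (n : ℕ) (φ ψ : Formula Agt AP), Formula.untl φ ψ ∈ H (r, n) →
      ∃ i, n ≤ i ∧ ψ ∈ H (r, i) ∧ ∀ j, n ≤ j → j < i → φ ∈ H (r, j)) ∧
  (∀ (x : G.Point) (A : Coalition Agt) (φ : Formula Agt AP),
      Formula.neg (Formula.dk A φ) ∈ H x →
      ∃ y : G.Point, G.RD A x y ∧ Formula.neg φ ∈ H y) ∧
  (∀ (x y : G.Point) (A : Coalition Agt), G.RD A x y →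
      ∀ (A' : Coalition Agt), A'.1 ⊆ A.1 → ∀ φ : Formula Agt AP,
        (Formula.dk A' φ ∈ H x ↔ Formula.dk A' φ ∈ H y)) ∧
  (∀ (x : G.Point) (A : Coalition Agt) (φ : Formula Agt AP),
      Formula.neg (Formula.ck A φ) ∈ H x →
      ∃ y : G.Point, G.RC A x y ∧ Formula.neg φ ∈ H y)

/-- A temporal-epistemic Hintikka structure. -/
structure TEHS (Agt AP : Type) where
  G : TES Agt
  H : G.Point → Set (Formula Agt AP)
  isH : IsHintikka G H

def TEHS.Synchronous (Hs : TEHS Agt AP) : Prop := Hs.G.Synchronous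

/-- Derived relation `R'^D_A`: the reflexive, symmetric and transitive closure of
the union of `R^D_B` over coalitions `B ⊇ A`. -/
def derivedRD (G : TES Agt) (A : Coalition Agt) : G.Point → G.Point → Prop :=
  Relation.EqvGen (fun x y => ∃ B : Coalition Agt, A.1 ⊆ B.1 ∧ G.RD B x y)

/-- Derived relation `R'^C_A`: the transitive closure of the union of
`R'^D_{{a}}` over `a ∈ A`. -/
def derivedRC (G : TES Agt) (A : Coalition Agt) : G.Point → G.Point → Prop :=
  Relation.TransGen (fun x y => ∃ a ∈ A.1, derivedRD G (single a) x y)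

/-- Derived labeling `L(r,n) = H(r,n) ∩ AP`. -/
def derivedLab (Hs : TEHS Agt AP) : Hs.G.Point → Set AP :=
  fun x => {p | Formula.atom p ∈ Hs.H x}

/-- Patently inconsistent set: contains a formula together with its negation. -/
def PatentlyInconsistent (Δ : Set (Formula Agt AP)) : Prop :=
  ∃ φ : Formula Agt AP, φ ∈ Δ ∧ Formula.neg φ ∈ Δ

/-- Minimal fully expanded extension. -/
def MinimalFEE (Γ Δ : Set (Formula Agt AP)) : Prop :=
  FullyExpanded Δ ∧ Γ ⊆ Δ ∧
  ¬ ∃ Δ' : Set (Formula Agt AP), FullyExpanded Δ' ∧ Γ ⊆ Δ' ∧ Δ' ⊂ Δ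

/-- A maximal path from `x` to `y`: consecutive points are related by `R^D_{A_i}`
and by no `R^D_B` for a strictly larger coalition `B`. -/
def IsMaximalPath (G : TES Agt) (m : ℕ) (pts : ℕ → G.Point) (cs : ℕ → Coalition Agt)
    (x y : G.Point) : Prop :=
  pts 0 = x ∧ pts m = y ∧ ∀ i < m,
    G.RD (cs i) (pts i) (pts (i + 1)) ∧
    ∀ B : Coalition Agt, (cs i).1 ⊂ B.1 → ¬ G.RD B (pts i) (pts (i + 1))

/-- A maximal path equals its reduction iff no two consecutive points lie on the
same run and no two consecutive coalition labels coincide. -/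
def IsReducedPath (G : TES Agt) (m : ℕ) (pts : ℕ → G.Point) (cs : ℕ → Coalition Agt) : Prop :=
  (∀ i < m, (pts i).1 ≠ (pts (i + 1)).1) ∧ (∀ i, i + 1 < m → cs i ≠ cs (i + 1))

/-- Forest-likeness: between any two points there is at most one reduced maximal path. -/
def ForestLike (G : TES Agt) : Prop :=
  ∀ (x y : G.Point) (m₁ : ℕ) (pts₁ : ℕ → G.Point) (cs₁ : ℕ → Coalition Agt)
    (m₂ : ℕ) (pts₂ : ℕ → G.Point) (cs₂ : ℕ → Coalition Agt),
    IsMaximalPath G m₁ pts₁ cs₁ x y → IsReducedPath G m₁ pts₁ cs₁ →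
    IsMaximalPath G m₂ pts₂ cs₂ x y → IsReducedPath G m₂ pts₂ cs₂ →
    m₁ = m₂ ∧ (∀ i ≤ m₁, pts₁ i = pts₂ i) ∧ (∀ i < m₁, cs₁ i = cs₂ i)

/-- Finite conjunction of a nonempty list of formulas. -/
def bigAnd : Formula Agt AP → List (Formula Agt AP) → Formula Agt AP
  | φ, [] => φ
  | φ, ψ :: l => Formula.and φ (bigAnd ψ l)

/-- `D_{{a}}(φ ∧ C_A φ)`. -/
def dform (A : Coalition Agt) (φ : Formula Agt AP) (a : Agt) : Formula Agt AP :=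
  Formula.dk (single a) (Formula.and φ (Formula.ck A φ))

lemma dRD_mono (G : TES Agt) {A B : Coalition Agt} (h : B.1 ⊆ A.1) :
    ∀ {x y : G.Point}, derivedRD G A x y → derivedRD G B x y := by
  intro x y hxy
  refine Relation.EqvGen.mono ?_ _ _ hxy
  rintro u v ⟨C, hC, hR⟩
  exact ⟨C, h.trans hC, hR⟩

lemma dkInv (Hs : TEHS Agt AP) (A : Coalition Agt) (φ : Formula Agt AP)
    {x y : Hs.G.Point} (h : derivedRD Hs.G A x y) :
    (Formula.dk A φ ∈ Hs.H x ↔ Formula.dk A φ ∈ Hs.H y) := by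
  induction h with
  | rel u v huv =>
      obtain ⟨B, hAB, hR⟩ := huv
      exact Hs.isH.2.2.2.2.2.1 u v B hR A hAB φ
  | refl => exact Iff.rfl
  | symm _ _ _ ih => exact ih.symm
  | trans _ _ _ _ _ ih1 ih2 => exact ih1.trans ih2

/-- The derived pseudo-TES of a TEHS. -/
def pTES (Hs : TEHS Agt AP) : TES Agt where
  State := Hs.G.State
  stateNE := Hs.G.stateNE
  runs := Hs.G.runs
  runsNE := Hs.G.runsNE
  RD := fun A => derivedRD Hs.G A
  RC := fun A => Relation.ReflTransGen
    (fun x y => ∃ A' : Coalition Agt, A'.1 ⊆ A.1 ∧ derivedRD Hs.G A' x y)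
  hRC := fun _ => rfl

/-- `ck A φ` is propagated along the derived common-knowledge steps. -/
lemma ckProp (Hs : TEHS Agt AP) (A : Coalition Agt) (φ : Formula Agt AP)
    {x y : Hs.G.Point}
    (hx : Formula.ck A φ ∈ Hs.H x)
    (h : Relation.ReflTransGen
      (fun u v => ∃ A' : Coalition Agt, A'.1 ⊆ A.1 ∧ derivedRD Hs.G A' u v) x y) :
    Formula.ck A φ ∈ Hs.H y := by
  induction h with
  | refl => exact hx
  | tail _ step ih =>
      obtain ⟨A', hsub, hR⟩ := step
      obtain ⟨a, ha⟩ := A'.2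
      have hRa : derivedRD Hs.G (single a) _ _ :=
        dRD_mono Hs.G (by intro z hz; rcases hz with rfl; exact ha) hR
      have hdk : Formula.dk (single a) (Formula.and φ (Formula.ck A φ)) ∈ Hs.H _ :=
        (Hs.isH.2.1 _).2.2.2.2.2.2.2.2.1 A φ ih a (hsub ha)
      have hdk' := (dkInv Hs (single a) (Formula.and φ (Formula.ck A φ)) hRa).1 hdk
      have hand := (Hs.isH.2.1 _).2.2.2.2.2.2.2.1 (single a) _ hdk'
      exact ((Hs.isH.2.1 _).2.1 _ _ hand).2

/-- Truth lemma for the derived pseudo-model. -/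
lemma truth (Hs : TEHS Agt AP) (φ : Formula Agt AP) :
    ∀ x : Hs.G.Point,
      (φ ∈ Hs.H x → Sat (pTES Hs).RD (pTES Hs).RC (derivedLab Hs) x φ) ∧
      (Formula.neg φ ∈ Hs.H x → ¬ Sat (pTES Hs).RD (pTES Hs).RC (derivedLab Hs) x φ) := by
  obtain ⟨h1, h2, h3, h4, h5, h6, h7⟩ := Hs.isH
  induction φ with
  | atom p =>
      intro x
      exact ⟨fun h => h, fun hn hs => h1 x _ hn hs⟩
  | neg φ ih =>
      intro x
      refine ⟨fun h => (ih x).2 h, fun hn hs => ?_⟩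
      exact hs ((ih x).1 ((h2 x).1 φ hn))
  | and φ ψ ihφ ihψ =>
      intro x
      constructor
      · intro h
        have := (h2 x).2.1 φ ψ h
        exact ⟨(ihφ x).1 this.1, (ihψ x).1 this.2⟩
      · intro hn hs
        rcases (h2 x).2.2.1 φ ψ hn with h | h
        · exact (ihφ x).2 h hs.1
        · exact (ihψ x).2 h hs.2
  | next φ ih =>
      intro ⟨r, n⟩
      constructor
      · intro h
        exact (ih (r, n + 1)).1 (h3 r n φ h)
      · intro hn hs
        have h' : Formula.next (Formula.neg φ) ∈ Hs.H (r, n) := (h2 _).2.2.2.1 φ hn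
        exact (ih (r, n + 1)).2 (h3 r n _ h') hs
  | untl φ ψ ihφ ihψ =>
      intro ⟨r, n⟩
      constructor
      · intro h
        obtain ⟨i, hni, hψ, hφs⟩ := h4 r n φ ψ h
        exact ⟨i, hni, (ihψ (r, i)).1 hψ, fun j h1j h2j => (ihφ (r, j)).1 (hφs j h1j h2j)⟩
      · intro hn hs
        obtain ⟨i, hni, hψ, hφs⟩ := hs
        have key : ∀ k m, Formula.neg (Formula.untl φ ψ) ∈ Hs.H (r, m) →
            Sat (pTES Hs).RD (pTES Hs).RC (derivedLab Hs) (r, m + k) ψ →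
            (∀ j, m ≤ j → j < m + k →
              Sat (pTES Hs).RD (pTES Hs).RC (derivedLab Hs) (r, j) φ) → False := by
          intro k
          induction k with
          | zero =>
              intro m hneg hψ' _
              rcases (h2 (r, m)).2.2.2.2.2.1 φ ψ hneg with ⟨hnψ, _⟩ | ⟨hnψ, _⟩ <;>
                exact (ihψ (r, m)).2 hnψ hψ'
          | succ k ihk =>
              intro m hneg hψ' hφs'
              rcases (h2 (r, m)).2.2.2.2.2.1 φ ψ hneg with ⟨hnψ, hnφ⟩ | ⟨hnψ, hnX⟩
              · exact (ihφ (r, m)).2 hnφ (hφs' m le_rfl (by omega))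
              · have hX : Formula.next (Formula.neg (Formula.untl φ ψ)) ∈ Hs.H (r, m) :=
                  (h2 (r, m)).2.2.2.1 _ hnX
                have hnext : Formula.neg (Formula.untl φ ψ) ∈ Hs.H (r, m + 1) :=
                  h3 r m _ hX
                refine ihk (m + 1) hnext ?_ ?_
                · have : m + 1 + k = m + (k + 1) := by omega
                  rw [this]; exact hψ'
                · intro j hj hj'
                  exact hφs' j (by omega) (by omega)
        have hik : i = n + (i - n) := by omega
        refine key (i - n) n hn ?_ (fun j h1j h2j => hφs j h1j (by omega))
        rw [← hik]; exact hψ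
  | dk A φ ih =>
      intro x
      constructor
      · intro h y hxy
        have hy : Formula.dk A φ ∈ Hs.H y := (dkInv Hs A φ hxy).1 h
        exact (ih y).1 ((h2 y).2.2.2.2.2.2.2.1 A φ hy)
      · intro hn hs
        obtain ⟨y, hxy, hnφ⟩ := h5 x A φ hn
        exact (ih y).2 hnφ (hs y (Relation.EqvGen.rel _ _ ⟨A, subset_rfl, hxy⟩))
  | ck A φ ih =>
      intro x
      constructor
      · intro h y hxy
        have hcky : Formula.ck A φ ∈ Hs.H y := ckProp Hs A φ h hxy
        obtain ⟨a, ha⟩ := A.2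
        have hdk := (h2 y).2.2.2.2.2.2.2.2.1 A φ hcky a ha
        have hand := (h2 y).2.2.2.2.2.2.2.1 (single a) _ hdk
        exact (ih y).1 ((h2 y).2.1 _ _ hand).1
      · intro hn hs
        obtain ⟨y, hxy, hnφ⟩ := h7 x A φ hn
        have hxy' : (pTES Hs).RC A x y := by
          rw [Hs.G.hRC A] at hxy
          refine Relation.ReflTransGen.mono ?_ _ _ hxy
          rintro u v ⟨A', hsub, hR⟩
          exact ⟨A', hsub, Relation.EqvGen.rel _ _ ⟨A', subset_rfl, hR⟩⟩
        exact (ih y).2 hnφ (hs y hxy')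

/-- If `θ` is satisfiable in some TEHS, then `θ` is satisfiable in a
pseudo-TEM. -/
theorem statement_4 {Agt AP : Type} [Fintype Agt] [Nonempty Agt]
    (θ : Formula Agt AP)
    (h : ∃ (Hs : TEHS Agt AP) (x : Hs.G.Point), θ ∈ Hs.H x) :
    ∃ (M : PseudoTEM Agt AP) (x : M.G.Point), M.sat x θ := by
  obtain ⟨Hs, x, hx⟩ := h
  refine ⟨⟨pTES Hs, derivedLab Hs, ?_, ?_⟩, x, (truth Hs θ x).1 hx⟩
  · intro A
    exact Relation.EqvGen.is_equivalence _
  · intro A B hBA x y hxy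
    exact dRD_mono Hs.G hBA hxy

end CMATEL
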